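/- Safety via Ville's inequality (c-martingale case): Suppose h(x_k) ≤ B a.s. for all k, with B > 0, and E[h(x_{k+1}) | F_k] ≥ h(x_k) − c for some c ≥ 0 and all k ≤ K, with x_0 deterministic. Then P(∃ k ≤ K, h(x_k) < 0) ≤ 1 − (h(x_0) − cK)/B. -/

import Mathlib

open MeasureTheory Filter

/-- Safety via Ville's inequality, c-martingale case: if `h(x_k) ≤ B` a.s. and the
c-martingale expectation condition holds with `c ≥ 0`, then
`P(∃ k ≤ K, h(x_k) < 0) ≤ 1 − (h(x_0) − cK)/B`. Here `Y k = h(x_k)`. -/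
theorem villes_safety_cmartingale
    {Ω : Type*} {m0 : MeasurableSpace Ω} {μ : Measure Ω} [IsProbabilityMeasure μ]
    (ℱ : Filtration ℕ m0) (Y : ℕ → Ω → ℝ)
    (hadp : Adapted ℱ Y) (hint : ∀ k, Integrable (Y k) μ)
    (y0 : ℝ) (hY0 : Y 0 = fun _ => y0)
    (B : ℝ) (hB : 0 < B) (hbd : ∀ k : ℕ, ∀ᵐ ω ∂μ, Y k ω ≤ B)
    (K : ℕ) (hK : 1 ≤ K)
    (c : ℝ) (hc : 0 ≤ c)
    (hmart : ∀ k ≤ K, ∀ᵐ ω ∂μ, Y k ω - c ≤ (μ[Y (k + 1) | ℱ k]) ω) :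
    (μ {ω | ∃ k ≤ K, Y k ω < 0}).toReal ≤ 1 - (y0 - c * K) / B := by
  classical
  -- The nonnegative supermartingale `W k = B + (K - k) c - Y k` (frozen after time `K`).
  set W : ℕ → Ω → ℝ :=
    fun k ω => (B + ((K - min k K : ℕ) : ℝ) * c) - Y (min k K) ω with hWdef
  have hWadp : Adapted ℱ W := fun k =>
    measurable_const.sub ((hadp (min k K)).mono (ℱ.mono (min_le_left k K)) le_rfl)
  have hWint : ∀ k, Integrable (W k) μ := fun k => (integrable_const _).sub (hint _)
  have hWsup : Supermartingale W ℱ μ := by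
    refine supermartingale_nat hWadp.stronglyAdapted hWint fun i => ?_
    by_cases hiK : i < K
    · have hmin : min i K = i := min_eq_left hiK.le
      have hmin' : min (i + 1) K = i + 1 := min_eq_left hiK
      have hWi1 : W (i + 1) =
          (fun _ : Ω => (B + ((K - (i + 1) : ℕ) : ℝ) * c)) - Y (i + 1) := by
        funext ω; simp only [hWdef, hmin', Pi.sub_apply]
      have hce : μ[W (i + 1) | ℱ i] =ᵐ[μ]
          (fun _ : Ω => (B + ((K - (i + 1) : ℕ) : ℝ) * c)) - μ[Y (i + 1) | ℱ i] := by
        rw [hWi1]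
        refine (condExp_sub (integrable_const _) (hint _) (ℱ i)).trans ?_
        rw [condExp_const (ℱ.le i)]
      have hcast : ((K - i : ℕ) : ℝ) = ((K - (i + 1) : ℕ) : ℝ) + 1 := by
        have h1 : i + 1 ≤ K := hiK
        rw [Nat.cast_sub hiK.le, Nat.cast_sub h1]
        push_cast
        ring
      filter_upwards [hce, hmart i hiK.le] with ω hω hmω
      rw [hω]
      simp only [hWdef, hmin, Pi.sub_apply, hcast]
      nlinarith [hc, hmω]
    · push_neg at hiK
      have hmin : min i K = K := min_eq_right hiK
      have hmin' : min (i + 1) K = K := min_eq_right (hiK.trans (Nat.le_succ i))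
      have hWeq : W (i + 1) = W i := by funext ω; simp only [hWdef, hmin, hmin']
      have hmeas : StronglyMeasurable[ℱ i] (W (i + 1)) := by
        rw [hWeq]
        exact (hWadp i).stronglyMeasurable
      rw [condExp_of_stronglyMeasurable (ℱ.le i) hmeas (hWint _), hWeq]
  -- the hitting time of level `B` by `W`
  set τ : Ω → WithTop ℕ := fun ω => (hittingBtwn W {y : ℝ | B ≤ y} 0 K ω : ℕ) with hτdef
  have hτ : IsStoppingTime ℱ τ := hWadp.isStoppingTime_hittingBtwn measurableSet_Ici
  have hτle : ∀ ω, τ ω ≤ K := fun ω => WithTop.coe_le_coe.mpr (hittingBtwn_le ω)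
  have hSVint : Integrable (stoppedValue W τ) μ :=
    integrable_stoppedValue ℕ hτ hWint hτle
  -- the maximal event
  set S : Set Ω :=
    {ω | B ≤ (Finset.range (K + 1)).sup' Finset.nonempty_range_add_one fun k => W k ω} with hSdef
  have hSmeas : MeasurableSet S :=
    measurableSet_le measurable_const
      (Finset.measurable_range_sup'' fun k _ =>
        (hWadp k).mono (ℱ.le k) le_rfl)
  -- event inclusion
  have hsub : {ω | ∃ k ≤ K, Y k ω < 0} ⊆ S := by
    rintro ω ⟨k, hkK, hkY⟩
    have hmin : min k K = k := min_eq_left hkK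
    have hWk : B ≤ W k ω := by
      simp only [hWdef, hmin]
      have : (0 : ℝ) ≤ ((K - k : ℕ) : ℝ) * c := by positivity
      linarith
    exact hWk.trans (Finset.le_sup' (fun k => W k ω)
      (Finset.mem_range.2 (Nat.lt_succ_of_le hkK)))
  -- stopped value is `≥ B` on `S`
  have hSV_ge : ∀ ω ∈ S, B ≤ stoppedValue W τ ω := by
    intro ω hω
    rw [hSdef, Set.mem_setOf_eq, Finset.le_sup'_iff] at hω
    obtain ⟨j, hj, hjB⟩ := hω
    exact stoppedValue_hittingBtwn_mem
      ⟨j, ⟨Nat.zero_le _, Nat.lt_succ_iff.mp (Finset.mem_range.mp hj)⟩, hjB⟩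
  -- stopped value is a.e. nonnegative
  have hSV_nonneg : 0 ≤ᵐ[μ] stoppedValue W τ := by
    filter_upwards [ae_all_iff.2 hbd] with ω hω
    have : Y (min (τ ω).untopA K) ω ≤ B := hω _
    have h2 : (0 : ℝ) ≤ ((K - min (τ ω).untopA K : ℕ) : ℝ) * c := by positivity
    simp only [stoppedValue, hWdef, Pi.zero_apply]
    linarith
  -- Ville's inequality chain
  have step1 : B * (μ S).toReal ≤ ∫ ω in S, stoppedValue W τ ω ∂μ :=
    by
      have := setIntegral_ge_of_const_le hSmeas (measure_ne_top _ _) hSV_ge hSVint.integrableOn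
      rw [smul_eq_mul, mul_comm] at this
      exact this
  have step2 : ∫ ω in S, stoppedValue W τ ω ∂μ ≤ ∫ ω, stoppedValue W τ ω ∂μ :=
    setIntegral_le_integral hSVint hSV_nonneg
  -- optional stopping: `E[W_τ] ≤ E[W_0]`
  have step3 : ∫ ω, stoppedValue W τ ω ∂μ ≤ ∫ ω, W 0 ω ∂μ := by
    have hmono := (hWsup.neg).expected_stoppedValue_mono
      (isStoppingTime_const ℱ 0) hτ (fun ω => WithTop.coe_le_coe.mpr (Nat.zero_le _)) hτle
    have hneg : stoppedValue (-W) τ = -(stoppedValue W τ) := by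
      funext ω; simp [stoppedValue]
    have hneg0 : stoppedValue (-W) (fun _ => 0) = -(W 0) := by
      funext ω; simp [stoppedValue]
    rw [stoppedValue_const] at hmono
    rw [hneg] at hmono
    have h0 : stoppedValue (-W) (fun _ => (0 : ℕ)) = -(W 0) := hneg0
    simp only [Pi.neg_apply, integral_neg] at hmono
    linarith
  -- compute `E[W_0]`
  have hW0 : ∫ ω, W 0 ω ∂μ = B + (K : ℝ) * c - y0 := by
    have : W 0 = fun _ : Ω => B + (K : ℝ) * c - y0 := by
      funext ω
      simp [hWdef, hY0]
    rw [this]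
    simp [integral_const]
  -- put things together
  have hμle : (μ {ω | ∃ k ≤ K, Y k ω < 0}).toReal ≤ (μ S).toReal :=
    ENNReal.toReal_mono (measure_ne_top _ _) (measure_mono hsub)
  have hchain : B * (μ {ω | ∃ k ≤ K, Y k ω < 0}).toReal ≤ B + (K : ℝ) * c - y0 := by
    have h1 : B * (μ {ω | ∃ k ≤ K, Y k ω < 0}).toReal ≤ B * (μ S).toReal :=
      mul_le_mul_of_nonneg_left hμle hB.le
    rw [hW0] at step3
    linarith
  have key : 1 - (y0 - c * (K : ℝ)) / B = (B + (K : ℝ) * c - y0) / B := by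
    field_simp
    ring
  rw [key, le_div_iff₀ hB]
  nlinarith [hchain]
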